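/- Let X(C) be a cubelike graph with connection set C ⊆ ℤ₂ⁿ such that the sum of the elements of C is 0 and |C| ≡ 0 (mod 4). Then for every graph G all of whose adjacency eigenvalues are integers, the transition matrix of the Kronecker product X(C) × G at time π/2 is the identity matrix. -/

import Mathlib

open Matrix Complex

/-- Adjacency matrix of the cubelike graph `X(C)` over `ℤ₂ⁿ`:
`x, y` adjacent iff `x + y ∈ C`. -/
noncomputable def cubeAdj {n : ℕ} (C : Set (Fin n → ZMod 2)) :
    Matrix (Fin n → ZMod 2) (Fin n → ZMod 2) ℂ :=
  Matrix.of fun x y => C.indicator (fun _ => (1 : ℂ)) (x + y)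

/-- Transition matrix `H(t) = exp(i t A)` of a graph with adjacency matrix `A`. -/
noncomputable def transitionM {V : Type*} [Fintype V] [DecidableEq V]
    (A : Matrix V V ℂ) (t : ℝ) : Matrix V V ℂ :=
  NormedSpace.exp ((Complex.I * (t : ℂ)) • A)

namespace CubeAux

/-- the bilinear form -/
def bil {n : ℕ} (a x : Fin n → ZMod 2) : ZMod 2 := ∑ i, a i * x i

/-- the character value -/
noncomputable def sgn {n : ℕ} (a x : Fin n → ZMod 2) : ℂ := if bil a x = 0 then 1 else -1

lemma zmod2 (z : ZMod 2) : z = 0 ∨ z = 1 := by revert z; decide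

lemma bil_add_right {n : ℕ} (a x y : Fin n → ZMod 2) :
    bil a (x + y) = bil a x + bil a y := by
  simp [bil, mul_add, Finset.sum_add_distrib]

lemma bil_add_left {n : ℕ} (a b x : Fin n → ZMod 2) :
    bil (a + b) x = bil a x + bil b x := by
  simp [bil, add_mul, Finset.sum_add_distrib]

lemma bil_comm {n : ℕ} (a x : Fin n → ZMod 2) : bil a x = bil x a := by
  simp [bil, mul_comm]

lemma sgn_add_right {n : ℕ} (a x y : Fin n → ZMod 2) :
    sgn a (x + y) = sgn a x * sgn a y := by
  unfold sgn
  rw [bil_add_right]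
  rcases zmod2 (bil a x) with h1 | h1 <;> rcases zmod2 (bil a y) with h2 | h2 <;>
    simp [h1, h2] <;> decide

lemma sgn_add_left {n : ℕ} (a b x : Fin n → ZMod 2) :
    sgn (a + b) x = sgn a x * sgn b x := by
  unfold sgn
  rw [bil_add_left]
  rcases zmod2 (bil a x) with h1 | h1 <;> rcases zmod2 (bil b x) with h2 | h2 <;>
    simp [h1, h2] <;> decide

lemma add_self {n : ℕ} (v : Fin n → ZMod 2) : v + v = 0 := by
  funext i
  have : ∀ z : ZMod 2, z + z = 0 := by decide
  exact this (v i)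

lemma sum_sgn {n : ℕ} {c : Fin n → ZMod 2} (hc : c ≠ 0) :
    ∑ x : Fin n → ZMod 2, sgn c x = 0 := by
  obtain ⟨i₀, hi₀⟩ := Function.ne_iff.mp hc
  have hci : c i₀ = 1 := (zmod2 (c i₀)).resolve_left hi₀
  set δ : Fin n → ZMod 2 := Pi.single i₀ 1 with hδ
  have hbil : bil c δ = 1 := by
    rw [bil, Finset.sum_eq_single i₀]
    · simp [hδ, hci]
    · intro b _ hb
      simp [hδ, Pi.single_eq_of_ne hb]
    · simp
  have key : ∑ x : Fin n → ZMod 2, sgn c x = ∑ x : Fin n → ZMod 2, sgn c (x + δ) :=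
    (Fintype.sum_equiv (Equiv.addRight δ) _ _ (fun x => rfl)).symm
  have hsd : sgn c δ = -1 := by simp [sgn, hbil]
  have : ∑ x : Fin n → ZMod 2, sgn c x = -∑ x : Fin n → ZMod 2, sgn c x := by
    nth_rewrite 1 [key]
    simp [sgn_add_right, hsd, Finset.sum_neg_distrib]
  have h2 : (2 : ℂ) * ∑ x : Fin n → ZMod 2, sgn c x = 0 := by linear_combination this
  have := mul_eq_zero.mp h2
  simpa using this

/-- character matrix -/
noncomputable def Fm (n : ℕ) : Matrix (Fin n → ZMod 2) (Fin n → ZMod 2) ℂ :=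
  Matrix.of sgn

lemma Fm_mul_Fm (n : ℕ) : Fm n * Fm n = ((2 : ℂ) ^ n) • 1 := by
  ext a b
  rw [mul_apply]
  have hterm : ∀ x, Fm n a x * Fm n x b = sgn (a + b) x := by
    intro x
    rw [sgn_add_left]
    congr 1
    show sgn x b = sgn b x
    simp [sgn, bil_comm]
  simp only [hterm]
  by_cases hab : a = b
  · subst hab
    have : a + a = 0 := add_self a
    rw [this]
    have : ∀ x : Fin n → ZMod 2, sgn (0 : Fin n → ZMod 2) x = 1 := by
      intro x; simp [sgn, bil]
    simp only [this, Finset.sum_const, Finset.card_univ]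
    simp [Fintype.card_fun, Matrix.smul_apply]
  · have hne : a + b ≠ 0 := by
      intro h
      apply hab
      have := congrArg (· + b) h
      simpa [add_assoc, add_self b] using this
    rw [sum_sgn hne]
    simp [Matrix.smul_apply, Matrix.one_apply_ne hab]

/-- integer eigenvalue -/
def lamZ {n : ℕ} (C : Finset (Fin n → ZMod 2)) (a : Fin n → ZMod 2) : ℤ :=
  ∑ c ∈ C, (if bil a c = 0 then 1 else -1)

lemma lamZ_cast {n : ℕ} (C : Finset (Fin n → ZMod 2)) (a : Fin n → ZMod 2) :
    ((lamZ C a : ℤ) : ℂ) = ∑ c ∈ C, sgn a c := by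
  simp [lamZ, sgn, apply_ite (fun z : ℤ => (z : ℂ))]

lemma Fm_mul_cubeAdj {n : ℕ} (C : Finset (Fin n → ZMod 2)) :
    Fm n * cubeAdj (↑C : Set (Fin n → ZMod 2)) =
      Matrix.diagonal (fun a => ((lamZ C a : ℤ) : ℂ)) * Fm n := by
  ext a y
  rw [mul_apply, diagonal_mul]
  have step1 : ∑ x, Fm n a x * cubeAdj (↑C : Set (Fin n → ZMod 2)) x y
      = ∑ x, sgn a (x + y) * (if x ∈ C then (1:ℂ) else 0) := by
    refine (Fintype.sum_equiv (Equiv.addRight y) _ _ ?_).symm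
    intro x
    simp only [Equiv.coe_addRight, Fm, cubeAdj, Matrix.of_apply]
    rw [add_assoc, add_self y, add_zero]
    congr 1
    rw [Set.indicator_apply]
    simp [Finset.mem_coe]
  rw [step1]
  have step2 : ∑ x, sgn a (x + y) * (if x ∈ C then (1:ℂ) else 0)
      = ∑ x ∈ C, sgn a (x + y) := by
    have : ∀ x : Fin n → ZMod 2, sgn a (x + y) * (if x ∈ C then (1:ℂ) else 0)
        = if x ∈ C then sgn a (x + y) else 0 := by
      intro x; by_cases hx : x ∈ C <;> simp [hx]
    rw [Finset.sum_congr rfl fun x _ => this x, Finset.sum_ite_mem, Finset.univ_inter]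
  rw [step2]
  have step3 : ∑ x ∈ C, sgn a (x + y) = (∑ x ∈ C, sgn a x) * sgn a y := by
    rw [Finset.sum_mul]
    exact Finset.sum_congr rfl fun x _ => sgn_add_right a x y
  rw [step3, lamZ_cast]
  rfl

lemma four_dvd_lamZ {n : ℕ} (C : Finset (Fin n → ZMod 2))
    (hσ : ∑ u ∈ C, u = 0) (hcard : C.card % 4 = 0) (a : Fin n → ZMod 2) :
    (4 : ℤ) ∣ lamZ C a := by
  set k : ℕ := ∑ c ∈ C, (bil a c).val with hk
  have hterm : ∀ c ∈ C, (if bil a c = 0 then (1:ℤ) else -1)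
      = 1 - 2 * ((bil a c).val : ℤ) := by
    intro c _
    rcases zmod2 (bil a c) with h | h <;> rw [h] <;> simp <;> decide
  have hlam : lamZ C a = (C.card : ℤ) - 2 * (k : ℤ) := by
    rw [lamZ, Finset.sum_congr rfl hterm, Finset.sum_sub_distrib]
    push_cast [hk, Finset.mul_sum]
    simp
  have hsum0 : ∑ c ∈ C, bil a c = 0 := by
    have : bil a (∑ c ∈ C, c) = ∑ c ∈ C, bil a c := by
      simp only [bil, Finset.sum_apply, Finset.mul_sum]
      exact Finset.sum_comm
    rw [← this, hσ]
    simp [bil]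
  have hkeven : 2 ∣ k := by
    rw [← ZMod.natCast_eq_zero_iff]
    push_cast [hk]
    have : ∀ c : Fin n → ZMod 2, (((bil a c).val : ℕ) : ZMod 2) = bil a c := fun c =>
      ZMod.natCast_rightInverse (bil a c)
    calc (∑ c ∈ C, (((bil a c).val : ℕ) : ZMod 2)) = ∑ c ∈ C, bil a c :=
          Finset.sum_congr rfl fun c _ => this c
      _ = 0 := hsum0
  obtain ⟨j, hj⟩ := hkeven
  obtain ⟨m, hm⟩ := Nat.dvd_of_mod_eq_zero hcard
  refine ⟨(m : ℤ) - (j : ℤ), ?_⟩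
  rw [hlam, hm, hj]
  push_cast
  ring

end CubeAux

open CubeAux Kronecker

theorem transition_cubelike_kronecker_integral {n : ℕ} (C : Finset (Fin n → ZMod 2))
    (hσ : ∑ u ∈ C, u = 0) (hcard : C.card % 4 = 0)
    {V : Type*} [Fintype V] [DecidableEq V] (G : SimpleGraph V) [DecidableRel G.Adj]
    (hint : ∀ μ ∈ spectrum ℂ (G.adjMatrix ℂ), ∃ k : ℤ, μ = (k : ℂ)) :
    transitionM
        (Matrix.kroneckerMap (· * ·) (cubeAdj (↑C : Set (Fin n → ZMod 2))) (G.adjMatrix ℂ))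
        (Real.pi / 2) = 1 := by
  classical
  set A := cubeAdj (↑C : Set (Fin n → ZMod 2)) with hA
  set B := G.adjMatrix ℂ with hBdef
  -- B is Hermitian
  have hB : B.IsHermitian := by
    ext i j
    simp [hBdef, Matrix.conjTranspose_apply, SimpleGraph.adjMatrix_apply,
      apply_ite (star : ℂ → ℂ), G.adj_comm]
  set eigs := hB.eigenvalues with heigs
  set U : Matrix V V ℂ := (hB.eigenvectorUnitary : Matrix V V ℂ) with hU
  -- integer eigenvalues of B
  have hkb : ∀ v : V, ∃ k : ℤ, ((eigs v : ℝ) : ℂ) = (k : ℂ) := by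
    intro v
    have hmem : ((eigs v : ℝ) : ℂ) ∈ spectrum ℂ B := by
      have := spectrum.algebraMap_mem ℂ (hB.eigenvalues_mem_spectrum_real v)
      rwa [show algebraMap ℝ ℂ (eigs v) = ((eigs v : ℝ) : ℂ) from rfl] at this
    exact hint _ hmem
  choose kb hkb' using hkb
  have hla : ∀ a, ∃ m : ℤ, lamZ C a = 4 * m := fun a =>
    (four_dvd_lamZ C hσ hcard a)
  choose la hla' using hla
  set F := Fm n with hF
  have c2 : ((2 : ℂ) ^ n) ≠ 0 := pow_ne_zero _ two_ne_zero
  -- diagonalizations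
  set Dl : Matrix (Fin n → ZMod 2) (Fin n → ZMod 2) ℂ :=
    Matrix.diagonal (fun a => ((lamZ C a : ℤ) : ℂ)) with hDl
  set Dm : Matrix V V ℂ := Matrix.diagonal (RCLike.ofReal ∘ eigs) with hDm
  have hAdecomp : A = (((2:ℂ)^n)⁻¹ • F) * (Dl * F) := by
    have h0 : F * A = Dl * F := Fm_mul_cubeAdj C
    calc A = (((2:ℂ)^n)⁻¹ • (F * F)) * A := by
            rw [Fm_mul_Fm, smul_smul, inv_mul_cancel₀ c2, one_smul, one_mul]
      _ = (((2:ℂ)^n)⁻¹ • F) * (F * A) := by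
            rw [smul_mul_assoc, smul_mul_assoc, mul_assoc]
      _ = (((2:ℂ)^n)⁻¹ • F) * (Dl * F) := by rw [h0]
  have hBdecomp : B = U * (Dm * star U) := by
    rw [← mul_assoc]
    exact hB.spectral_theorem
  -- the conjugating unit
  have hUU : U * star U = 1 := Matrix.mem_unitaryGroup_iff.mp hB.eigenvectorUnitary.2
  have hUU' : star U * U = 1 := Matrix.mem_unitaryGroup_iff'.mp hB.eigenvectorUnitary.2
  set P := (((2:ℂ)^n)⁻¹ • F) ⊗ₖ U with hP
  set Q := F ⊗ₖ (star U) with hQ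
  have hPQ : P * Q = 1 := by
    rw [hP, hQ, ← Matrix.mul_kronecker_mul, smul_mul_assoc, Fm_mul_Fm, smul_smul,
      inv_mul_cancel₀ c2, one_smul, hUU, Matrix.one_kronecker_one]
  have hQP : Q * P = 1 := by
    rw [hP, hQ, ← Matrix.mul_kronecker_mul, mul_smul_comm, Fm_mul_Fm, smul_smul,
      inv_mul_cancel₀ c2, one_smul, hUU', Matrix.one_kronecker_one]
  set Punit : (Matrix ((Fin n → ZMod 2) × V) ((Fin n → ZMod 2) × V) ℂ)ˣ :=
    ⟨P, Q, hPQ, hQP⟩ with hPunit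
  set d : (Fin n → ZMod 2) × V → ℂ :=
    fun p => ((lamZ C p.1 : ℤ) : ℂ) * RCLike.ofReal (eigs p.2) with hd
  have hMdecomp : A ⊗ₖ B = P * Matrix.diagonal d * Q := by
    rw [hAdecomp, hBdecomp, Matrix.mul_kronecker_mul, Matrix.mul_kronecker_mul,
      Matrix.diagonal_kronecker_diagonal, ← mul_assoc]
    rfl
  -- exponential
  rw [transitionM, hMdecomp]
  set c : ℂ := Complex.I * ((Real.pi / 2 : ℝ) : ℂ) with hc
  have hsmul : c • (P * Matrix.diagonal d * Q)
      = (Punit : Matrix _ _ ℂ) * Matrix.diagonal (c • d) * ((Punit⁻¹ : _ˣ) : Matrix _ _ ℂ) := by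
    rw [Matrix.diagonal_smul]
    show c • (P * Matrix.diagonal d * Q) = P * (c • Matrix.diagonal d) * Q
    rw [mul_smul_comm, smul_mul_assoc]
  rw [hsmul, Matrix.exp_units_conj Punit, Matrix.exp_diagonal]
  have hdiag : NormedSpace.exp (c • d) = fun _ => (1 : ℂ) := by
    funext p
    rw [Pi.coe_exp, ← Complex.exp_eq_exp_ℂ]
    have : (c • d) p = ((la p.1 * kb p.2 : ℤ) : ℂ) * (2 * Real.pi * Complex.I) := by
      have h1 : ((lamZ C p.1 : ℤ) : ℂ) = ((4 * la p.1 : ℤ) : ℂ) := by rw [hla' p.1]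
      have h2 : (RCLike.ofReal (eigs p.2) : ℂ) = ((kb p.2 : ℤ) : ℂ) := hkb' p.2
      simp only [Pi.smul_apply, hd, smul_eq_mul]
      rw [h1, h2, hc]
      push_cast
      ring
    rw [this, Complex.exp_int_mul_two_pi_mul_I]
  rw [hdiag, Matrix.diagonal_one, mul_one]
  exact Punit.mul_inv
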